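/- Let d < n with d odd. The distance-d Hamming graph Q_n^d on vertex set {0,1}^n (vertices adjacent iff their Hamming distance equals d) admits an all-pair unit-demand multicommodity flow φ with cng(φ) ≤ n·2^n / C(n,d). Consequently cng(Q_n^d) ≤ n·2^n/C(n,d). -/

import Mathlib

open Finset
open scoped symmDiff

/-- The distance-`d` Hamming graph on `{0,1}ⁿ`. -/
def Qnd (n d : ℕ) : SimpleGraph (Fin n → Bool) where
  Adj x y := x ≠ y ∧ hammingDist x y = d
  symm := by
    constructor
    intro x y h
    exact ⟨h.1.symm, by rw [hammingDist_comm]; exact h.2⟩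
  loopless := by constructor; intro x h; exact h.1 rfl

instance (n d : ℕ) : DecidableRel (Qnd n d).Adj := fun x y =>
  inferInstanceAs (Decidable (x ≠ y ∧ hammingDist x y = d))

namespace Q6aux

/-! ### arithmetic -/

lemma choose_le_choose_of_add_le {n a b : ℕ} (hab : a ≤ b) (h : a + b ≤ n) :
    n.choose a ≤ n.choose b := by
  have hbn : b ≤ n := le_trans (Nat.le_add_left _ _) h
  have key := Nat.choose_mul (n := n) hab
  have h1 : b.choose a ≤ (n - a).choose (b - a) := by
    calc b.choose a = b.choose (b - a) := (Nat.choose_symm hab).symm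
    _ ≤ (n - a).choose (b - a) := Nat.choose_le_choose _ (by omega)
  have hpos : 0 < (n - a).choose (b - a) := Nat.choose_pos (by omega)
  have := calc n.choose a * (n - a).choose (b - a) = n.choose b * b.choose a := key.symm
    _ ≤ n.choose b * (n - a).choose (b - a) := Nat.mul_le_mul_left _ h1
  exact Nat.le_of_mul_le_mul_right this hpos

lemma sum_k_choose (n : ℕ) (hn : 1 ≤ n) :
    ∑ k ∈ range (n + 1), n.choose k * k = n * 2 ^ (n - 1) := by
  obtain ⟨m, rfl⟩ := Nat.exists_eq_add_of_le hn
  rw [Finset.sum_range_succ']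
  simp only [Nat.choose_zero_right, Nat.mul_zero, Nat.add_zero]
  have : ∀ k, (1 + m).choose (k + 1) * (k + 1) = (1 + m) * m.choose k := by
    intro k
    have h2 := Nat.add_one_mul_choose_eq m k
    rw [Nat.add_comm 1 m, h2]
  rw [Finset.sum_congr rfl fun k _ => this k, ← Finset.mul_sum]
  have : ∑ k ∈ range (m + 1), m.choose k = 2 ^ m := Nat.sum_range_choose m
  rw [Nat.add_comm m 1] at this
  rw [this]
  simp

/-- length-bound function -/
def ellF (d k : ℕ) : ℕ := if Even k then k else 1 + (k - d) + (d - k)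

lemma key_binom (n d : ℕ) (hd : Odd d) (hdn : d < n) :
    ∑ k ∈ range (n + 1), n.choose k * ellF d k ≤ n * 2 ^ (n - 1) := by
  have hmain : ∑ k ∈ range (n + 1), (n.choose k : ℤ) * ellF d k ≤
      ∑ k ∈ range (n + 1), (n.choose k : ℤ) * k := by
    rw [← sub_nonneg, ← Finset.sum_sub_distrib]
    have hterm : ∀ k, (n.choose k : ℤ) * k - (n.choose k : ℤ) * ellF d k
        = (n.choose k : ℤ) * ((k : ℤ) - ellF d k) := by intro k; ring
    simp only [hterm]
    set δ : ℕ → ℤ := fun k => (n.choose k : ℤ) * ((k : ℤ) - ellF d k) with hδ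
    have hδeven : ∀ k, Even k → δ k = 0 := by
      intro k hk; simp [hδ, ellF, hk]
    have hδoddbig : ∀ k, ¬ Even k → d ≤ k → δ k = (n.choose k : ℤ) * (d - 1) := by
      intro k hk hdk
      have h1 : (1 : ℕ) ≤ d := hd.pos
      simp only [hδ, ellF, if_neg hk]
      have : ((1 + (k - d) + (d - k) : ℕ) : ℤ) = (k : ℤ) - (d - 1) := by
        have : d - k = 0 := by omega
        rw [this]
        push_cast [Nat.cast_sub hdk]
        ring
      rw [this]; ring_nf
    have hδoddsmall : ∀ k, ¬ Even k → k ≤ d → δ k = (n.choose k : ℤ) * (2 * k - d - 1) := by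
      intro k hk hkd
      simp only [hδ, ellF, if_neg hk]
      have : ((1 + (k - d) + (d - k) : ℕ) : ℤ) = (d : ℤ) + 1 - k := by
        have h0 : k - d = 0 := by omega
        rw [h0]
        push_cast [Nat.cast_sub hkd]
        ring
      rw [this]; ring_nf
    set s : Finset ℕ := (range (d + 1)).filter (fun k => ¬ Even k) with hs
    have hsub : s ⊆ range (n + 1) := by
      intro k hk
      simp only [hs, Finset.mem_filter, Finset.mem_range] at hk ⊢
      omega
    have hstep : ∑ k ∈ s, δ k ≤ ∑ k ∈ range (n + 1), δ k := by
      apply Finset.sum_le_sum_of_subset_of_nonneg hsub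
      intro k _ hks
      rcases Nat.even_or_odd k with he | ho
      · rw [hδeven k he]
      · have hkd : d ≤ k := by
          by_contra hc
          apply hks
          simp only [hs, Finset.mem_filter, Finset.mem_range]
          exact ⟨by omega, by simpa using ho⟩
        rw [hδoddbig k (by simpa using ho) hkd]
        have : (0:ℤ) ≤ (d : ℤ) - 1 := by have := hd.pos; omega
        positivity
    refine le_trans ?_ hstep
    have hform : ∀ k ∈ s, δ k = (n.choose k : ℤ) * (2 * k - d - 1) := by
      intro k hk
      simp only [hs, Finset.mem_filter, Finset.mem_range] at hk
      exact hδoddsmall k hk.2 (by omega)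
    rw [Finset.sum_congr rfl hform]
    set f : ℕ → ℤ := fun k => (n.choose k : ℤ) * (2 * k - d - 1) with hf
    have hdm : d % 2 = 1 := Nat.odd_iff.mp hd
    have hmem : ∀ k ∈ s, d + 1 - k ∈ s := by
      intro k hk
      simp only [hs, Finset.mem_filter, Finset.mem_range, Nat.not_even_iff_odd,
        Nat.odd_iff] at hk ⊢
      omega
    have hinv : ∀ k ∈ s, d + 1 - (d + 1 - k) = k := by
      intro k hk
      simp only [hs, Finset.mem_filter, Finset.mem_range] at hk
      omega
    have hreindex : ∑ k ∈ s, f k = ∑ k ∈ s, f (d + 1 - k) := by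
      apply Finset.sum_nbij' (fun k => d + 1 - k) (fun k => d + 1 - k)
      · exact hmem
      · exact hmem
      · exact hinv
      · exact hinv
      · intro k hk; rw [hinv k hk]
    have h2sum : 2 * ∑ k ∈ s, f k = ∑ k ∈ s, (f k + f (d + 1 - k)) := by
      rw [Finset.sum_add_distrib, ← hreindex]; ring
    have hpair : ∀ k ∈ s, 0 ≤ f k + f (d + 1 - k) := by
      intro k hk
      simp only [hs, Finset.mem_filter, Finset.mem_range] at hk
      obtain ⟨h1, h2⟩ := hk
      rw [Nat.not_even_iff_odd, Nat.odd_iff] at h2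
      have hk1 : 1 ≤ k := by omega
      have hkd : k ≤ d := by omega
      have hcast : ((d + 1 - k : ℕ) : ℤ) = (d : ℤ) + 1 - k := by
        push_cast [Nat.cast_sub (by omega : k ≤ d + 1)]; ring
      have : f k + f (d + 1 - k)
          = (2 * (k:ℤ) - d - 1) * ((n.choose k : ℤ) - (n.choose (d + 1 - k) : ℤ)) := by
        simp only [hf, hcast]; ring
      rw [this]
      rcases le_or_gt (2 * k) (d + 1) with hle | hlt
      · have ha : (2 * (k:ℤ)) ≤ (d:ℤ) + 1 := by exact_mod_cast hle
        have hcc : n.choose k ≤ n.choose (d + 1 - k) :=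
          choose_le_choose_of_add_le (by omega) (by omega)
        have hb : ((n.choose k : ℤ)) ≤ (n.choose (d + 1 - k) : ℤ) := by exact_mod_cast hcc
        nlinarith
      · apply mul_nonneg
        · have : ((d:ℤ) + 1) < 2 * (k:ℤ) := by exact_mod_cast hlt
          omega
        · have hcc : n.choose (d + 1 - k) ≤ n.choose k :=
            choose_le_choose_of_add_le (by omega) (by omega)
          omega
    have : 0 ≤ 2 * ∑ k ∈ s, f k := by
      rw [h2sum]; exact Finset.sum_nonneg hpair
    linarith
  have hfin := sum_k_choose n (by omega)
  have h2 : ((∑ k ∈ range (n + 1), n.choose k * ellF d k : ℕ) : ℤ)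
      ≤ ((∑ k ∈ range (n + 1), n.choose k * k : ℕ) : ℤ) := by
    push_cast
    exact hmain
  have h3 := Nat.cast_le (α := ℤ) |>.mp h2
  omega

/-! ### flips and difference sets -/

variable {n d : ℕ}

def flipS (F : Finset (Fin n)) (x : Fin n → Bool) : Fin n → Bool :=
  fun i => if i ∈ F then !x i else x i

def diffs (x y : Fin n → Bool) : Finset (Fin n) := univ.filter (fun i => x i ≠ y i)

lemma hamming_eq_card_diffs (x y : Fin n → Bool) : hammingDist x y = (diffs x y).card := rfl

lemma eq_of_diffs_card_zero {x y : Fin n → Bool} (h : (diffs x y).card = 0) : x = y := by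
  rw [← hamming_eq_card_diffs] at h
  exact hammingDist_eq_zero.mp h

lemma diffs_flipS (F : Finset (Fin n)) (x y : Fin n → Bool) :
    diffs (flipS F x) y = (diffs x y) ∆ F := by
  ext i
  simp only [diffs, Finset.mem_filter, Finset.mem_univ, true_and, Finset.mem_symmDiff]
  by_cases hiF : i ∈ F <;> cases hx : x i <;> cases hy : y i <;> simp [hiF, hx, hy, flipS]

lemma diffs_self_flipS (F : Finset (Fin n)) (x : Fin n → Bool) :
    diffs x (flipS F x) = F := by
  ext i
  simp only [diffs, flipS, Finset.mem_filter, Finset.mem_univ, true_and]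
  by_cases hiF : i ∈ F <;> cases hx : x i <;> simp [hiF]

lemma flipS_diffs (x y : Fin n → Bool) : flipS (diffs x y) x = y := by
  funext i
  simp only [flipS, diffs, Finset.mem_filter, Finset.mem_univ, true_and]
  by_cases hxy : x i = y i <;> cases hx : x i <;> cases hy : y i <;> simp_all

lemma adj_flipS (hd : 0 < d) {F : Finset (Fin n)} (hF : F.card = d) (x : Fin n → Bool) :
    (Qnd n d).Adj x (flipS F x) := by
  constructor
  · intro hxy
    have : diffs x (flipS F x) = ∅ := by
      rw [← hxy]; ext i; simp [diffs]
    rw [diffs_self_flipS] at this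
    rw [this] at hF
    simp at hF
    omega
  · rw [hamming_eq_card_diffs, diffs_self_flipS, hF]

/-- the bijection `y ↦ diffs x y` -/
def diffsEquiv (x : Fin n → Bool) : (Fin n → Bool) ≃ Finset (Fin n) where
  toFun y := diffs x y
  invFun S := flipS S x
  left_inv y := flipS_diffs x y
  right_inv S := diffs_self_flipS S x

/-! ### walk construction -/

lemma exists_walk_even (hd : 0 < d) (hdn : d < n) :
    ∀ (m : ℕ) (x y : Fin n → Bool), (diffs x y).card = 2 * m →
      ∃ w : (Qnd n d).Walk x y, w.length ≤ 2 * m := by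
  intro m
  induction m with
  | zero =>
    intro x y h
    obtain rfl : x = y := eq_of_diffs_card_zero (by omega)
    exact ⟨SimpleGraph.Walk.nil, by simp⟩
  | succ m ih =>
    intro x y h
    set S := diffs x y with hS
    have hcard : S.card = 2 * m + 2 := by omega
    have hne : S.Nonempty := Finset.card_pos.mp (by omega)
    obtain ⟨i, hi⟩ := hne
    have hne2 : (S.erase i).Nonempty :=
      Finset.card_pos.mp (by rw [Finset.card_erase_of_mem hi]; omega)
    obtain ⟨j, hj⟩ := hne2
    have hji : j ≠ i := Finset.ne_of_mem_erase hj
    have hjS : j ∈ S := Finset.mem_of_mem_erase hj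
    have hcardc : d - 1 ≤ (univ \ {i, j} : Finset (Fin n)).card := by
      rw [Finset.card_sdiff_of_subset (by simp)]
      rw [Finset.card_univ, Fintype.card_fin]
      have : ({i, j} : Finset (Fin n)).card ≤ 2 :=
        Finset.card_insert_le _ _ |>.trans (by simp)
      omega
    obtain ⟨M, hMsub, hMcard⟩ := Finset.exists_subset_card_eq hcardc
    have hiM : i ∉ M := fun hmem => by simpa using (hMsub hmem)
    have hjM : j ∉ M := fun hmem => by simpa using (hMsub hmem)
    set F1 := insert i M with hF1
    set F2 := insert j M with hF2
    have hF1card : F1.card = d := by rw [hF1, Finset.card_insert_of_notMem hiM]; omega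
    have hF2card : F2.card = d := by rw [hF2, Finset.card_insert_of_notMem hjM]; omega
    set x1 := flipS F1 x with hx1
    set x2 := flipS F2 x1 with hx2
    have ha1 : (Qnd n d).Adj x x1 := adj_flipS hd hF1card x
    have ha2 : (Qnd n d).Adj x1 x2 := adj_flipS hd hF2card x1
    have hd2 : diffs x2 y = S \ {i, j} := by
      rw [hx2, diffs_flipS, hx1, diffs_flipS, ← hS, symmDiff_assoc]
      have hF12 : F1 ∆ F2 = {i, j} := by
        ext a
        simp only [Finset.mem_symmDiff, hF1, hF2, Finset.mem_insert, Finset.mem_singleton]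
        by_cases hai : a = i <;> by_cases haj : a = j <;>
          simp [hai, haj, hiM, hjM, hji, hji.symm]
      rw [hF12]
      ext a
      simp only [Finset.mem_symmDiff, Finset.mem_sdiff, Finset.mem_insert, Finset.mem_singleton]
      constructor
      · rintro (⟨h1, h2⟩ | ⟨h1, h2⟩)
        · exact ⟨h1, h2⟩
        · rcases h1 with rfl | rfl
          · exact absurd hi h2
          · exact absurd hjS h2
      · rintro ⟨h1, h2⟩; exact Or.inl ⟨h1, h2⟩
    have hd2card : (diffs x2 y).card = 2 * m := by
      rw [hd2, Finset.card_sdiff_of_subset]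
      · rw [hcard]
        rw [Finset.card_insert_of_notMem (by simp [hji.symm]), Finset.card_singleton]
        omega
      · intro a ha
        simp only [Finset.mem_insert, Finset.mem_singleton] at ha
        rcases ha with rfl | rfl
        · exact hi
        · exact hjS
    obtain ⟨w, hw⟩ := ih x2 y hd2card
    exact ⟨SimpleGraph.Walk.cons ha1 (SimpleGraph.Walk.cons ha2 w), by
      simp only [SimpleGraph.Walk.length_cons]; omega⟩

lemma exists_walk (hd : Odd d) (hdn : d < n) (x y : Fin n → Bool) :
    ∃ w : (Qnd n d).Walk x y, w.length ≤ ellF d (hammingDist x y) := by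
  have hd0 : 0 < d := hd.pos
  set k := hammingDist x y with hk
  have hkc : (diffs x y).card = k := (hamming_eq_card_diffs x y).symm
  rcases Nat.even_or_odd k with he | ho
  · obtain ⟨m, hm⟩ := he
    obtain ⟨w, hw⟩ := exists_walk_even hd0 hdn m x y (by omega)
    exact ⟨w, by rw [ellF, if_pos ⟨m, hm⟩]; omega⟩
  · rcases le_or_gt d k with hdk | hkd
    · obtain ⟨F, hFsub, hFcard⟩ :=
        Finset.exists_subset_card_eq (by omega : d ≤ (diffs x y).card)
      set x1 := flipS F x with hx1
      have ha : (Qnd n d).Adj x x1 := adj_flipS hd0 hFcard x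
      have hda : diffs x1 y = diffs x y \ F := by
        rw [hx1, diffs_flipS]
        rw [symmDiff_eq_sup_sdiff_inf, Finset.inf_eq_inter, Finset.sup_eq_union]
        rw [Finset.union_eq_left.mpr hFsub, Finset.inter_eq_right.mpr hFsub]
      have hdacard : (diffs x1 y).card = k - d := by
        rw [hda, Finset.card_sdiff_of_subset hFsub]; omega
      have heven : Even (k - d) := Nat.Odd.sub_odd ho hd
      obtain ⟨m, hm⟩ := heven
      obtain ⟨w, hw⟩ := exists_walk_even hd0 hdn m x1 y (by omega)
      refine ⟨SimpleGraph.Walk.cons ha w, ?_⟩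
      rw [ellF, if_neg (Nat.not_even_iff_odd.mpr ho)]
      simp only [SimpleGraph.Walk.length_cons]
      omega
    · have hroom : d - k ≤ (univ \ diffs x y : Finset (Fin n)).card := by
        rw [Finset.card_sdiff_of_subset (Finset.subset_univ _), Finset.card_univ, Fintype.card_fin, hkc]
        omega
      obtain ⟨T, hTsub, hTcard⟩ := Finset.exists_subset_card_eq hroom
      have hdisj : Disjoint (diffs x y) T := by
        rw [Finset.disjoint_right]
        intro a haT haS
        have := hTsub haT
        simp only [Finset.mem_sdiff] at this
        exact this.2 haS
      set F := diffs x y ∪ T with hF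
      have hFcard : F.card = d := by
        rw [hF, Finset.card_union_of_disjoint hdisj, hkc]; omega
      set x1 := flipS F x with hx1
      have ha : (Qnd n d).Adj x x1 := adj_flipS hd0 hFcard x
      have hda : diffs x1 y = T := by
        rw [hx1, diffs_flipS, hF]
        rw [symmDiff_eq_sup_sdiff_inf, Finset.inf_eq_inter, Finset.sup_eq_union]
        rw [Finset.union_eq_right.mpr Finset.subset_union_left,
          Finset.inter_eq_left.mpr Finset.subset_union_left]
        rw [Finset.union_sdiff_cancel_left hdisj]
      have hdacard : (diffs x1 y).card = d - k := by rw [hda, hTcard]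
      have heven : Even (d - k) := Nat.Odd.sub_odd hd ho
      obtain ⟨m, hm⟩ := heven
      obtain ⟨w, hw⟩ := exists_walk_even hd0 hdn m x1 y (by omega)
      refine ⟨SimpleGraph.Walk.cons ha w, ?_⟩
      rw [ellF, if_neg (Nat.not_even_iff_odd.mpr ho)]
      simp only [SimpleGraph.Walk.length_cons]
      omega

/-! ### the symmetry "group" -/

abbrev GG (n : ℕ) := (Fin n → Bool) × Equiv.Perm (Fin n)

def act (g : GG n) : (Fin n → Bool) ≃ (Fin n → Bool) where
  toFun x := fun i => xor (g.1 i) (x (g.2⁻¹ i))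
  invFun y := fun j => xor (g.1 (g.2 j)) (y (g.2 j))
  left_inv := by intro x; funext j; simp
  right_inv := by intro y; funext i; simp

lemma act_apply (g : GG n) (x : Fin n → Bool) (i : Fin n) :
    act g x i = xor (g.1 i) (x (g.2⁻¹ i)) := rfl

lemma act_symm_apply (g : GG n) (y : Fin n → Bool) (j : Fin n) :
    (act g).symm y j = xor (g.1 (g.2 j)) (y (g.2 j)) := rfl

def gmul (g h : GG n) : GG n := (fun i => xor (g.1 i) (h.1 (g.2⁻¹ i)), g.2 * h.2)

def ginv (g : GG n) : GG n := (fun i => g.1 (g.2 i), g.2⁻¹)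

lemma act_gmul (g h : GG n) (x : Fin n → Bool) :
    act (gmul g h) x = act g (act h x) := by
  funext i
  simp [act_apply, gmul, Bool.xor_assoc]

lemma act_ginv (g : GG n) : act (ginv g) = (act g).symm := by
  ext y j
  simp [act_apply, act_symm_apply, ginv]

lemma gmul_ginv_cancel (g h : GG n) : gmul (gmul g h) (ginv h) = g := by
  unfold gmul ginv
  refine Prod.ext ?_ ?_
  · funext i
    simp [Bool.xor_assoc]
  · simp [mul_assoc]

lemma ginv_gmul_cancel (g h : GG n) : gmul (gmul g (ginv h)) h = g := by
  unfold gmul ginv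
  refine Prod.ext ?_ ?_
  · funext i
    simp [Bool.xor_assoc]
  · simp [mul_assoc]

lemma hamming_act (g : GG n) (x y : Fin n → Bool) :
    hammingDist (act g x) (act g y) = hammingDist x y := by
  unfold hammingDist
  apply Finset.card_bij (fun i _ => g.2⁻¹ i)
  · intro i hi
    simp only [Finset.mem_filter, Finset.mem_univ, true_and] at hi ⊢
    simp only [act_apply] at hi
    intro hc
    exact hi (by rw [hc])
  · intro i hi j hj hij
    exact g.2⁻¹.injective hij
  · intro j hj
    refine ⟨g.2 j, ?_, by simp⟩
    simp only [Finset.mem_filter, Finset.mem_univ, true_and] at hj ⊢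
    simp only [act_apply, Equiv.Perm.inv_def, Equiv.symm_apply_apply]
    intro hc
    apply hj
    cases hgj : g.1 (g.2 j) <;> cases hx : x j <;> cases hy : y j <;>
      simp_all

lemma act_adj (g : GG n) {x y : Fin n → Bool} (h : (Qnd n d).Adj x y) :
    (Qnd n d).Adj (act g x) (act g y) :=
  ⟨(act g).injective.ne h.1, by rw [hamming_act]; exact h.2⟩

/-- transitivity on equal-Hamming-distance pairs -/
lemma exists_act_maps {a b c c' : Fin n → Bool}
    (h : hammingDist c c' = hammingDist a b) :
    ∃ g : GG n, act g c = a ∧ act g c' = b := by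
  classical
  set p : Fin n → Prop := fun i => c i ≠ c' i with hp
  set q : Fin n → Prop := fun i => a i ≠ b i with hq
  have hcardpq : Fintype.card {i // p i} = Fintype.card {i // q i} := by
    have h1 : Fintype.card {i // p i} = hammingDist c c' := by
      rw [hammingDist]; exact Fintype.card_subtype _
    have h2 : Fintype.card {i // q i} = hammingDist a b := by
      rw [hammingDist]; exact Fintype.card_subtype _
    rw [h1, h2, h]
  have hcardnpq : Fintype.card {i // ¬ p i} = Fintype.card {i // ¬ q i} := by
    have h3 := Fintype.card_subtype_compl (p := p)
    have h4 := Fintype.card_subtype_compl (p := q)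
    rw [h3, h4, hcardpq]
  obtain ⟨ep⟩ := Fintype.card_eq.mp hcardpq.symm
  obtain ⟨en⟩ := Fintype.card_eq.mp hcardnpq.symm
  set σ : Equiv.Perm (Fin n) := Equiv.subtypeCongr ep en with hσ
  have happly : ∀ (i : Fin n) (h : q i), σ i = (ep ⟨i, h⟩ : Fin n) := by
    intro i h
    simp [hσ, Equiv.subtypeCongr, Equiv.sumCompl_symm_apply_of_pos h]
  have happlyn : ∀ (i : Fin n) (h : ¬ q i), σ i = (en ⟨i, h⟩ : Fin n) := by
    intro i h
    simp [hσ, Equiv.subtypeCongr, Equiv.sumCompl_symm_apply_of_neg h]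
  have hσq : ∀ i, q i → p (σ i) := by
    intro i hi
    rw [happly i hi]
    exact (ep ⟨i, hi⟩).2
  have hσnq : ∀ i, ¬ q i → ¬ p (σ i) := by
    intro i hi
    rw [happlyn i hi]
    exact (en ⟨i, hi⟩).2
  refine ⟨(fun i => xor (c (σ i)) (a i), σ⁻¹), ?_, ?_⟩
  · funext i
    simp only [act_apply, inv_inv]
    cases hc : c (σ i) <;> cases ha : a i <;> simp [hc, ha]
  · funext i
    simp only [act_apply, inv_inv]
    have hiff : (c (σ i) ≠ c' (σ i)) ↔ (a i ≠ b i) := by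
      constructor
      · intro h1
        by_contra h2
        exact absurd h1 (hσnq i (fun hne => hne h2))
      · intro h1
        exact hσq i h1
    cases hc : c (σ i) <;> cases hc' : c' (σ i) <;> cases ha : a i <;> cases hb : b i <;>
      simp [hc, hc', ha, hb] at hiff ⊢

/-! ### Sym2 helpers -/

lemma sym2_map_symm_eq {α : Type*} (q : α ≃ α) (z w : Sym2 α) :
    Sym2.map (⇑q.symm) z = w ↔ z = Sym2.map (⇑q) w := by
  constructor
  · rintro rfl
    rw [Sym2.map_map]
    have : ⇑q ∘ ⇑q.symm = id := q.self_comp_symm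
    rw [this, Sym2.map_id, id_eq]
  · rintro rfl
    rw [Sym2.map_map]
    have : ⇑q.symm ∘ ⇑q = id := q.symm_comp_self
    rw [this, Sym2.map_id, id_eq]


/-! ### edges under the action -/

lemma edge_act_mem (g : GG n) {e : Sym2 (Fin n → Bool)} (he : e ∈ (Qnd n d).edgeFinset) :
    Sym2.map ⇑(act g) e ∈ (Qnd n d).edgeFinset := by
  revert he
  refine Sym2.ind (fun u v => ?_) e
  intro he
  rw [SimpleGraph.mem_edgeFinset, SimpleGraph.mem_edgeSet] at he
  rw [Sym2.map_pair_eq, SimpleGraph.mem_edgeFinset, SimpleGraph.mem_edgeSet]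
  exact act_adj g he

lemma edge_trans {e f : Sym2 (Fin n → Bool)} (he : e ∈ (Qnd n d).edgeFinset)
    (hf : f ∈ (Qnd n d).edgeFinset) :
    ∃ g : GG n, Sym2.map ⇑(act g) f = e := by
  revert he hf
  refine Sym2.ind (fun a b => ?_) e
  refine Sym2.ind (fun c c' => ?_) f
  intro he hf
  rw [SimpleGraph.mem_edgeFinset, SimpleGraph.mem_edgeSet] at he hf
  have hh : hammingDist c c' = hammingDist a b := by
    rw [hf.2, he.2]
  obtain ⟨g, hg1, hg2⟩ := exists_act_maps hh
  exact ⟨g, by rw [Sym2.map_pair_eq, hg1, hg2]⟩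

lemma sym2_act_gmul (g h : GG n) (z : Sym2 (Fin n → Bool)) :
    Sym2.map ⇑(act (gmul g h)) z = Sym2.map ⇑(act g) (Sym2.map ⇑(act h) z) := by
  rw [Sym2.map_map]
  congr 1
  funext x
  exact act_gmul g h x

/-! ### degree -/

lemma degree_Qnd (hd0 : 0 < d) (hdn : d ≤ n) (x : Fin n → Bool) :
    (Qnd n d).degree x = n.choose d := by
  show ((Qnd n d).neighborFinset x).card = n.choose d
  have hbij : ((Qnd n d).neighborFinset x).card
      = (Finset.powersetCard d (univ : Finset (Fin n))).card := by
    apply Finset.card_bij' (fun y _ => diffs x y) (fun S _ => flipS S x)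
    · intro y hy
      rw [SimpleGraph.mem_neighborFinset] at hy
      rw [Finset.mem_powersetCard]
      exact ⟨Finset.subset_univ _, by rw [← hamming_eq_card_diffs]; exact hy.2⟩
    · intro S hS
      rw [Finset.mem_powersetCard] at hS
      rw [SimpleGraph.mem_neighborFinset]
      exact adj_flipS hd0 hS.2 x
    · intro y _
      exact flipS_diffs x y
    · intro S _
      exact diffs_self_flipS S x
  rw [hbij, Finset.card_powersetCard, Finset.card_univ, Fintype.card_fin]

lemma two_mul_card_edges (hd0 : 0 < d) (hdn : d ≤ n) :
    2 * (Qnd n d).edgeFinset.card = 2 ^ n * n.choose d := by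
  have h := SimpleGraph.sum_degrees_eq_twice_card_edges (Qnd n d)
  rw [Finset.sum_congr rfl (fun x _ => degree_Qnd hd0 hdn x), Finset.sum_const,
    Finset.card_univ, smul_eq_mul] at h
  have hcV : Fintype.card (Fin n → Bool) = 2 ^ n := by
    rw [Fintype.card_fun, Fintype.card_bool, Fintype.card_fin]
  rw [hcV] at h
  omega

/-! ### summation over `y` grouped by Hamming distance -/

lemma sum_y (x : Fin n → Bool) (f : ℕ → ℝ) :
    ∑ y : Fin n → Bool, f (hammingDist x y)
      = ∑ k ∈ range (n + 1), (n.choose k : ℝ) * f k := by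
  have h1 : ∑ y : Fin n → Bool, f (hammingDist x y)
      = ∑ S : Finset (Fin n), f S.card := by
    apply Fintype.sum_equiv (diffsEquiv x)
    intro y
    rw [hamming_eq_card_diffs]
    rfl
  rw [h1]
  rw [← Finset.sum_fiberwise_of_maps_to
    (g := fun S : Finset (Fin n) => S.card) (t := range (n + 1))
    (fun S _ => by
      rw [Finset.mem_range]
      have : S.card ≤ n := by
        have := Finset.card_le_card (Finset.subset_univ S)
        rwa [Finset.card_univ, Fintype.card_fin] at this
      exact Nat.lt_succ_of_le this)]
  apply Finset.sum_congr rfl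
  intro k _
  rw [Finset.sum_congr rfl (fun S hS => by rw [(Finset.mem_filter.mp hS).2])]
  rw [Finset.sum_const, nsmul_eq_mul]
  congr 1
  have : (univ : Finset (Finset (Fin n))).filter (fun S => S.card = k)
      = Finset.powersetCard k (univ : Finset (Fin n)) := by
    rw [Finset.powersetCard_eq_filter, Finset.powerset_univ]
  rw [this, Finset.card_powersetCard, Finset.card_univ, Fintype.card_fin]

/-! ### base paths and their translates -/

noncomputable def bPath (hd : Odd d) (hdn : d < n) (x y : Fin n → Bool) :
    (Qnd n d).Path x y :=
  (exists_walk hd hdn x y).choose.toPath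

lemma bPath_len (hd : Odd d) (hdn : d < n) (x y : Fin n → Bool) :
    (bPath hd hdn x y : (Qnd n d).Walk x y).length ≤ ellF d (hammingDist x y) :=
  le_trans (SimpleGraph.Walk.length_bypass_le _) (exists_walk hd hdn x y).choose_spec

def homG (g : GG n) : (Qnd n d) →g (Qnd n d) :=
  ⟨⇑(act g), fun h => act_adj g h⟩

lemma homG_coe (g : GG n) : ⇑(homG (d := d) g) = ⇑(act g) := rfl

noncomputable def TPw (hd : Odd d) (hdn : d < n) (g : GG n) (x y : Fin n → Bool) :
    (Qnd n d).Walk x y :=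
  ((bPath hd hdn ((act g).symm x) ((act g).symm y) : (Qnd n d).Walk _ _).map (homG g)).copy
    ((act g).apply_symm_apply x) ((act g).apply_symm_apply y)

lemma TPw_isPath (hd : Odd d) (hdn : d < n) (g : GG n) (x y : Fin n → Bool) :
    (TPw hd hdn g x y).IsPath := by
  unfold TPw
  refine (SimpleGraph.Walk.isPath_copy _ _ _).mpr ?_
  exact SimpleGraph.Walk.map_isPath_of_injective (act g).injective (bPath hd hdn _ _).2

noncomputable def TPp (hd : Odd d) (hdn : d < n) (g : GG n) (x y : Fin n → Bool) :
    (Qnd n d).Path x y :=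
  ⟨TPw hd hdn g x y, TPw_isPath hd hdn g x y⟩

lemma mem_edges_TPw (hd : Odd d) (hdn : d < n) (g : GG n) (x y : Fin n → Bool)
    (e : Sym2 (Fin n → Bool)) :
    e ∈ (TPw hd hdn g x y).edges ↔
      Sym2.map ⇑(act g).symm e
        ∈ ((bPath hd hdn ((act g).symm x) ((act g).symm y) : (Qnd n d).Path _ _) :
            (Qnd n d).Walk ((act g).symm x) ((act g).symm y)).edges := by
  unfold TPw
  erw [SimpleGraph.Walk.edges_copy]
  rw [SimpleGraph.Walk.edges_map, List.mem_map]
  constructor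
  · rintro ⟨u, hu, rfl⟩
    have : Sym2.map ⇑(act g).symm (Sym2.map (⇑(homG (d := d) g)) u) = u := by
      rw [homG_coe (d := d), Sym2.map_map, (act g).symm_comp_self, Sym2.map_id, id_eq]
    rwa [this]
  · intro h
    refine ⟨_, h, ?_⟩
    rw [homG_coe (d := d), Sym2.map_map, (act g).self_comp_symm, Sym2.map_id, id_eq]

end Q6aux

set_option maxHeartbeats 2000000 in
open Q6aux in
/-- Lemma 3.1: for odd `d < n`, `Q_n^d` admits an all-pair unit-demand multicommodity
flow with congestion at most `n·2ⁿ / C(n,d)`; hence `cng(Q_n^d) ≤ n·2ⁿ / C(n,d)`. -/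
theorem stmt_6 (n d : ℕ) (hd : Odd d) (hdn : d < n) :
    ∃ φ : ∀ x y : Fin n → Bool, (Qnd n d).Path x y → ℝ,
      (∀ x y p, 0 ≤ φ x y p) ∧
      (∀ x y : Fin n → Bool, x ≠ y → ∑ p : (Qnd n d).Path x y, φ x y p = 1) ∧
      ∀ e ∈ (Qnd n d).edgeFinset,
        ∑ x : Fin n → Bool, ∑ y : Fin n → Bool, ∑ p : (Qnd n d).Path x y,
          (if e ∈ (p : (Qnd n d).Walk x y).edges then φ x y p else 0)
          ≤ n * 2 ^ n / (n.choose d) := by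
  classical
  have hd0 : 0 < d := hd.pos
  have hGpos : 0 < Fintype.card (GG n) := Fintype.card_pos
  refine ⟨fun x y p => ((univ.filter (fun g : GG n => TPp hd hdn g x y = p)).card : ℝ)
      / (Fintype.card (GG n) : ℝ), ?_, ?_, ?_⟩
  · intro x y p; positivity
  · intro x y _
    rw [← Finset.sum_div]
    have hpart := Finset.card_eq_sum_card_fiberwise
      (f := fun g : GG n => TPp hd hdn g x y) (s := univ) (t := univ) (fun g _ => mem_univ _)
    rw [Finset.card_univ] at hpart
    have hnum : ∑ p : (Qnd n d).Path x y,
        ((univ.filter (fun g : GG n => TPp hd hdn g x y = p)).card : ℝ)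
        = (Fintype.card (GG n) : ℝ) := by exact_mod_cast (congrArg (Nat.cast (R := ℝ)) hpart.symm)
    rw [hnum, div_self (by exact_mod_cast hGpos.ne')]
  · intro e he
    set E := (Qnd n d).edgeFinset with hE
    set Gc : ℝ := (Fintype.card (GG n) : ℝ) with hGc
    have hGcpos : (0:ℝ) < Gc := by rw [hGc]; exact_mod_cast hGpos
    set Lc : Sym2 (Fin n → Bool) → ℝ := fun f => ∑ x : Fin n → Bool, ∑ y : Fin n → Bool,
      (if f ∈ (bPath hd hdn x y : (Qnd n d).Walk x y).edges then (1:ℝ) else 0) with hLc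
    set em : GG n → Sym2 (Fin n → Bool) := fun g => Sym2.map ⇑(act g).symm e with hem
    -- Step 1 : collapse the sum over paths into a sum over group elements
    have hstep1 : ∀ x y : Fin n → Bool,
        (∑ p : (Qnd n d).Path x y, if e ∈ (p : (Qnd n d).Walk x y).edges
            then ((univ.filter (fun g : GG n => TPp hd hdn g x y = p)).card : ℝ) / Gc else 0)
        = (∑ g : GG n, if e ∈ (TPw hd hdn g x y).edges then (1:ℝ) else 0) / Gc := by
      intro x y
      have h1 : ∀ p : (Qnd n d).Path x y,
          (if e ∈ (p : (Qnd n d).Walk x y).edges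
            then ((univ.filter (fun g : GG n => TPp hd hdn g x y = p)).card : ℝ) / Gc else 0)
          = (if e ∈ (p : (Qnd n d).Walk x y).edges
            then ((univ.filter (fun g : GG n => TPp hd hdn g x y = p)).card : ℝ) else 0) / Gc := by
        intro p; split_ifs <;> simp
      rw [Finset.sum_congr rfl (fun p _ => h1 p), ← Finset.sum_div]
      congr 1
      calc ∑ p : (Qnd n d).Path x y, (if e ∈ (p : (Qnd n d).Walk x y).edges
              then ((univ.filter (fun g : GG n => TPp hd hdn g x y = p)).card : ℝ) else 0)
          = ∑ p : (Qnd n d).Path x y, ∑ g : GG n,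
              (if TPp hd hdn g x y = p then
                (if e ∈ (p : (Qnd n d).Walk x y).edges then (1:ℝ) else 0) else 0) := by
            apply Finset.sum_congr rfl
            intro p _
            by_cases hc : e ∈ (p : (Qnd n d).Walk x y).edges
            · simp only [hc, if_true]
              exact (Finset.sum_boole _ _).symm
            · simp [hc]
        _ = ∑ g : GG n, ∑ p : (Qnd n d).Path x y,
              (if TPp hd hdn g x y = p then
                (if e ∈ (p : (Qnd n d).Walk x y).edges then (1:ℝ) else 0) else 0) :=
            Finset.sum_comm
        _ = ∑ g : GG n, (if e ∈ (TPw hd hdn g x y).edges then (1:ℝ) else 0) := by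
            apply Finset.sum_congr rfl
            intro g _
            rw [Finset.sum_ite_eq univ (TPp hd hdn g x y)
              (fun p => if e ∈ (p : (Qnd n d).Walk x y).edges then (1:ℝ) else 0)]
            rw [if_pos (mem_univ _)]
            rfl
    -- Step 2 : reindex
    have hstep2 : ∀ g : GG n,
        (∑ x : Fin n → Bool, ∑ y : Fin n → Bool,
          if e ∈ (TPw hd hdn g x y).edges then (1:ℝ) else 0) = Lc (em g) := by
      intro g
      have hre : ∀ x y : Fin n → Bool,
          (if e ∈ (TPw hd hdn g x y).edges then (1:ℝ) else 0)
          = (if em g ∈ (bPath hd hdn ((act g).symm x) ((act g).symm y) :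
              (Qnd n d).Walk ((act g).symm x) ((act g).symm y)).edges then (1:ℝ) else 0) := by
        intro x y
        exact if_congr (mem_edges_TPw hd hdn g x y e) rfl rfl
      rw [Finset.sum_congr rfl (fun x _ => Finset.sum_congr rfl (fun y _ => hre x y))]
      simp only [hLc]
      have houter : ∀ x' : Fin n → Bool,
          (∑ y : Fin n → Bool, if em g ∈ (bPath hd hdn x' ((act g).symm y) :
              (Qnd n d).Walk x' ((act g).symm y)).edges then (1:ℝ) else 0)
          = ∑ y : Fin n → Bool, if em g ∈ (bPath hd hdn x' y :
              (Qnd n d).Walk x' y).edges then (1:ℝ) else 0 :=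
        fun x' => Equiv.sum_comp (act g).symm
          (fun y => if em g ∈ (bPath hd hdn x' y : (Qnd n d).Walk x' y).edges then (1:ℝ) else 0)
      rw [Finset.sum_congr rfl (fun x _ => houter ((act g).symm x))]
      exact Equiv.sum_comp (act g).symm
        (fun x => ∑ y : Fin n → Bool,
          if em g ∈ (bPath hd hdn x y : (Qnd n d).Walk x y).edges then (1:ℝ) else 0)
    -- Step 3 : fiber decomposition over edges
    have hemE : ∀ g : GG n, em g ∈ E := by
      intro g
      have h2 := edge_act_mem (d := d) (ginv g) he
      rwa [act_ginv] at h2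
    have hfibersum : ∑ g : GG n, Lc (em g)
        = ∑ f ∈ E, ((univ.filter (fun g : GG n => em g = f)).card : ℝ) * Lc f := by
      rw [← Finset.sum_fiberwise_of_maps_to (fun g (_ : g ∈ univ) => hemE g)
        (fun g => Lc (em g))]
      refine Finset.sum_congr rfl (fun f hf => ?_)
      rw [Finset.sum_congr rfl (fun g hg => by rw [(Finset.mem_filter.mp hg).2]),
        Finset.sum_const, nsmul_eq_mul]
    have hconv : ∀ f : Sym2 (Fin n → Bool),
        univ.filter (fun g : GG n => em g = f)
          = univ.filter (fun g : GG n => Sym2.map ⇑(act g) f = e) := by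
      intro f
      apply Finset.filter_congr
      intro g _
      simp only [hem]
      rw [sym2_map_symm_eq]
      exact eq_comm
    set K : ℕ := (univ.filter (fun g : GG n => Sym2.map ⇑(act g) e = e)).card with hK
    have hfibK : ∀ f ∈ E, (univ.filter (fun g : GG n => em g = f)).card = K := by
      intro f hf
      rw [hconv f, hK]
      obtain ⟨g0, hg0⟩ := edge_trans (d := d) hf he
      apply Finset.card_nbij' (i := fun g => gmul g g0) (j := fun h => gmul h (ginv g0))
      · intro g hg
        simp only [Finset.mem_coe, Finset.mem_filter, Finset.mem_univ, true_and] at hg ⊢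
        rw [sym2_act_gmul, hg0, hg]
      · intro h hh
        simp only [Finset.mem_coe, Finset.mem_filter, Finset.mem_univ, true_and] at hh ⊢
        rw [sym2_act_gmul, act_ginv]
        have : Sym2.map ⇑(act g0).symm f = e := by
          rw [sym2_map_symm_eq]
          exact hg0.symm
        rw [this, hh]
      · intro g _
        exact gmul_ginv_cancel g g0
      · intro h _
        exact ginv_gmul_cancel h g0
    have hKE : K * E.card = Fintype.card (GG n) := by
      have hpart := Finset.card_eq_sum_card_fiberwise (fun (g : GG n) (_ : g ∈ univ) => hemE g)
      rw [Finset.card_univ, Finset.sum_congr rfl (fun f hf => hfibK f hf),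
        Finset.sum_const, smul_eq_mul] at hpart
      rw [Nat.mul_comm]
      exact hpart.symm
    -- Step 4 : total length bound
    have hLsum : ∑ f ∈ E, Lc f ≤ (2 ^ n : ℝ) * ((n * 2 ^ (n - 1) : ℕ) : ℝ) := by
      have hswap : ∑ f ∈ E, Lc f
          = ∑ x : Fin n → Bool, ∑ y : Fin n → Bool,
              ((bPath hd hdn x y : (Qnd n d).Walk x y).length : ℝ) := by
        simp only [hLc]
        rw [Finset.sum_comm]
        apply Finset.sum_congr rfl; intro x _
        rw [Finset.sum_comm]
        apply Finset.sum_congr rfl; intro y _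
        rw [Finset.sum_boole]
        have hfe : E.filter (fun f => f ∈ (bPath hd hdn x y : (Qnd n d).Walk x y).edges)
            = (bPath hd hdn x y : (Qnd n d).Walk x y).edges.toFinset := by
          ext f
          simp only [Finset.mem_filter, List.mem_toFinset]
          constructor
          · exact fun h => h.2
          · intro h
            refine ⟨?_, h⟩
            rw [hE, SimpleGraph.mem_edgeFinset]
            exact (bPath hd hdn x y : (Qnd n d).Walk x y).edges_subset_edgeSet h
        rw [hfe, List.toFinset_card_of_nodup (bPath hd hdn x y).2.isTrail.edges_nodup,
          SimpleGraph.Walk.length_edges]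
      rw [hswap]
      have hxbound : ∀ x : Fin n → Bool,
          (∑ y : Fin n → Bool, ((bPath hd hdn x y : (Qnd n d).Walk x y).length : ℝ))
          ≤ ((n * 2 ^ (n - 1) : ℕ) : ℝ) := by
        intro x
        calc ∑ y : Fin n → Bool, ((bPath hd hdn x y : (Qnd n d).Walk x y).length : ℝ)
            ≤ ∑ y : Fin n → Bool, ((ellF d (hammingDist x y) : ℕ) : ℝ) := by
              apply Finset.sum_le_sum
              intro y _
              exact_mod_cast bPath_len hd hdn x y
          _ = ∑ k ∈ range (n + 1), (n.choose k : ℝ) * ((ellF d k : ℕ) : ℝ) :=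
              sum_y x (fun k => ((ellF d k : ℕ) : ℝ))
          _ = ((∑ k ∈ range (n + 1), n.choose k * ellF d k : ℕ) : ℝ) := by push_cast; ring
          _ ≤ ((n * 2 ^ (n - 1) : ℕ) : ℝ) := by
              exact_mod_cast key_binom n d hd hdn
      calc ∑ x : Fin n → Bool, ∑ y : Fin n → Bool,
              ((bPath hd hdn x y : (Qnd n d).Walk x y).length : ℝ)
          ≤ ∑ _x : Fin n → Bool, ((n * 2 ^ (n - 1) : ℕ) : ℝ) :=
            Finset.sum_le_sum (fun x _ => hxbound x)
        _ = (2 ^ n : ℝ) * ((n * 2 ^ (n - 1) : ℕ) : ℝ) := by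
            rw [Finset.sum_const, Finset.card_univ, nsmul_eq_mul]
            congr 1
            rw [Fintype.card_fun, Fintype.card_bool, Fintype.card_fin]
            push_cast
            ring
    -- numeric facts
    have hEpos : 0 < E.card := by
      have h2 := two_mul_card_edges (n := n) (d := d) hd0 (le_of_lt hdn)
      have hchoose : 0 < n.choose d := Nat.choose_pos (le_of_lt hdn)
      have hpow : 0 < 2 ^ n := Nat.pow_pos (by omega)
      rcases Nat.eq_zero_or_pos E.card with h0 | h
      · rw [hE] at h0
        rw [h0, Nat.mul_zero] at h2
        exact absurd h2.symm (Nat.mul_ne_zero hpow.ne' hchoose.ne')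
      · exact h
    have hKpos : 0 < K := by
      rcases Nat.eq_zero_or_pos K with h0 | h
      · rw [h0, Nat.zero_mul] at hKE
        omega
      · exact h
    have hKEr : (K : ℝ) * (E.card : ℝ) = Gc := by rw [hGc]; exact_mod_cast hKE
    have h2Er : 2 * (E.card : ℝ) = (2:ℝ)^n * (n.choose d : ℝ) := by
      exact_mod_cast two_mul_card_edges (n := n) (d := d) hd0 (le_of_lt hdn)
    have hEr : (0:ℝ) < E.card := by exact_mod_cast hEpos
    have hKr : (0:ℝ) < K := by exact_mod_cast hKpos
    have hDr : (0:ℝ) < (n.choose d : ℝ) := by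
      exact_mod_cast Nat.choose_pos (le_of_lt hdn)
    -- assemble
    calc ∑ x : Fin n → Bool, ∑ y : Fin n → Bool, ∑ p : (Qnd n d).Path x y,
            (if e ∈ (p : (Qnd n d).Walk x y).edges then
              ((univ.filter (fun g : GG n => TPp hd hdn g x y = p)).card : ℝ) / Gc else 0)
        = ∑ x : Fin n → Bool, ∑ y : Fin n → Bool,
            (∑ g : GG n, if e ∈ (TPw hd hdn g x y).edges then (1:ℝ) else 0) / Gc :=
          Finset.sum_congr rfl (fun x _ => Finset.sum_congr rfl (fun y _ => hstep1 x y))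
      _ = (∑ g : GG n, ∑ x : Fin n → Bool, ∑ y : Fin n → Bool,
            if e ∈ (TPw hd hdn g x y).edges then (1:ℝ) else 0) / Gc := by
          rw [Finset.sum_congr rfl (fun x (_ : x ∈ (univ : Finset (Fin n → Bool))) =>
            (Finset.sum_div _ _ _).symm), ← Finset.sum_div]
          congr 1
          rw [Finset.sum_congr rfl (fun x (_ : x ∈ univ) => Finset.sum_comm)]
          exact Finset.sum_comm
      _ = (∑ g : GG n, Lc (em g)) / Gc := by
          rw [Finset.sum_congr rfl (fun g _ => hstep2 g)]
      _ = ((K : ℝ) * ∑ f ∈ E, Lc f) / Gc := by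
          rw [hfibersum, Finset.mul_sum]
          congr 1
          refine Finset.sum_congr rfl (fun f hf => ?_)
          rw [hfibK f hf]
      _ = (∑ f ∈ E, Lc f) / (E.card : ℝ) := by
          rw [← hKEr, mul_div_mul_left _ _ (ne_of_gt hKr)]
      _ ≤ ((2 ^ n : ℝ) * ((n * 2 ^ (n - 1) : ℕ) : ℝ)) / (E.card : ℝ) := by
          gcongr
      _ ≤ (n : ℝ) * 2 ^ n / (n.choose d : ℝ) := by
          rw [div_le_div_iff₀ hEr hDr]
          have hcast : ((n * 2 ^ (n - 1) : ℕ) : ℝ) = (n : ℝ) * 2 ^ (n - 1) := by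
            push_cast; ring
          rw [hcast]
          have hp : (2:ℝ)^n = 2^(n-1) * 2 := by
            rw [← pow_succ]
            congr 1
            omega
          apply le_of_eq
          linear_combination (-(n:ℝ) * 2^n / 2) * h2Er
            + (-(n:ℝ) * ((n.choose d : ℝ)) * 2^n / 2) * hp
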